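/- Define (c_g)_{g≥0} by c_0 = −1 and, for g ≥ 1, c_g = (1/2) Σ_{g_1=1}^{g−1} c_{g_1} c_{g−g_1} + (1/12)(5g−4)(5g−6) c_{g−1}. Then for any fixed real t_0, t_2 with t_2 ≠ 0 and 1 − 2 t_0 t_2 > 0, the power series in λ given by Σ_{g≥0} c_g t_2^{3g−1} (1 − 2 t_0 t_2)^{−(5g−1)/2} λ^{2g} has radius of convergence equal to zero. -/

import Mathlib

open Filter
open scoped ENNReal

/-- The coefficients of `Σ_g c_g t₂^{3g−1} (1 − 2t₀t₂)^{−(5g−1)/2} λ^{2g}` as a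
power series `Σ_n b_n λ^n` in `λ`: `b` vanishes in odd degrees, and in degree
`n = 2g` equals `c_g t₂^{3g−1} (1 − 2t₀t₂)^{−(5g−1)/2}`. -/
noncomputable def lambdaCoeff (c : ℕ → ℝ) (t0 t2 : ℝ) (n : ℕ) : ℝ :=
  if Even n then
    c (n / 2) * t2 ^ (3 * ((n / 2 : ℕ) : ℤ) - 1)
      * (1 - 2 * t0 * t2) ^ (-(5 * ((n / 2 : ℕ) : ℝ) - 1) / 2)
  else 0

lemma c_pos (c : ℕ → ℝ) (hc0 : c 0 = -1)
    (hcrec : ∀ g : ℕ, 1 ≤ g →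
      c g = (1 / 2) * (∑ i ∈ Finset.Ico 1 g, c i * c (g - i))
        + (1 / 12) * (5 * (g : ℝ) - 4) * (5 * (g : ℝ) - 6) * c (g - 1)) :
    ∀ g : ℕ, 1 ≤ g → 0 < c g := by
  intro g
  induction g using Nat.strong_induction_on with
  | _ g ih =>
    intro hg
    rcases eq_or_lt_of_le hg with h1 | h2
    · subst h1
      rw [hcrec 1 le_rfl]
      simp [hc0]
      norm_num
    · have hg2 : 2 ≤ g := h2
      rw [hcrec g hg]
      have hsum : 0 ≤ ∑ i ∈ Finset.Ico 1 g, c i * c (g - i) := by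
        apply Finset.sum_nonneg
        intro i hi
        simp only [Finset.mem_Ico] at hi
        have h1 : 0 < c i := ih i hi.2 hi.1
        have h2 : 0 < c (g - i) := by
          apply ih
          · omega
          · omega
        positivity
      have hprev : 0 < c (g - 1) := by
        apply ih
        · omega
        · omega
      have hgr : (2 : ℝ) ≤ (g : ℝ) := by exact_mod_cast hg2
      nlinarith [hprev, hsum, mul_pos (mul_pos (show (0:ℝ) < 5*(g:ℝ)-4 by linarith) (show (0:ℝ) < 5*(g:ℝ)-6 by linarith)) hprev]

lemma c_lb (c : ℕ → ℝ) (hc0 : c 0 = -1)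
    (hcrec : ∀ g : ℕ, 1 ≤ g →
      c g = (1 / 2) * (∑ i ∈ Finset.Ico 1 g, c i * c (g - i))
        + (1 / 12) * (5 * (g : ℝ) - 4) * (5 * (g : ℝ) - 6) * c (g - 1)) :
    ∀ g : ℕ, 1 ≤ g → (g.factorial : ℝ) / 12 ^ g ≤ c g := by
  intro g hg
  induction g, hg using Nat.le_induction with
  | base =>
    rw [hcrec 1 le_rfl]
    simp [hc0]
    norm_num
  | succ g hg ih =>
    have hsum : 0 ≤ ∑ i ∈ Finset.Ico 1 (g+1), c i * c (g + 1 - i) := by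
      apply Finset.sum_nonneg
      intro i hi
      simp only [Finset.mem_Ico] at hi
      have h1 := c_pos c hc0 hcrec i hi.1
      have h2 := c_pos c hc0 hcrec (g + 1 - i) (by omega)
      positivity
    have hprev : (g.factorial : ℝ) / 12 ^ g ≤ c g := ih
    have hprevpos : 0 < c g := c_pos c hc0 hcrec g hg
    rw [hcrec (g+1) (by omega)]
    have hcast : ((g + 1 : ℕ) : ℝ) = (g : ℝ) + 1 := by push_cast; ring
    simp only [Nat.add_sub_cancel, hcast]
    have hfac : ((g+1).factorial : ℝ) = ((g:ℝ) + 1) * g.factorial := by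
      rw [Nat.factorial_succ]; push_cast; ring
    have hgr : (1 : ℝ) ≤ (g : ℝ) := by exact_mod_cast hg
    have hkey : ((g:ℝ)+1) / 12 * ((g.factorial : ℝ) / 12 ^ g)
        ≤ (1 / 12) * (5 * ((g:ℝ)+1) - 4) * (5 * ((g:ℝ)+1) - 6) * c g := by
      have hcoef : ((g:ℝ)+1) ≤ (5 * ((g:ℝ)+1) - 4) * (5 * ((g:ℝ)+1) - 6) := by
        nlinarith
      have hfp : (0:ℝ) < (g.factorial : ℝ) / 12 ^ g := by positivity
      calc ((g:ℝ)+1) / 12 * ((g.factorial : ℝ) / 12 ^ g)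
          ≤ ((g:ℝ)+1) / 12 * c g := by
            apply mul_le_mul_of_nonneg_left hprev (by positivity)
        _ ≤ (1 / 12) * (5 * ((g:ℝ)+1) - 4) * (5 * ((g:ℝ)+1) - 6) * c g := by
            rw [div_mul_eq_mul_div, mul_comm]
            nlinarith [mul_le_mul_of_nonneg_right hcoef (le_of_lt hprevpos)]
    have : ((g+1).factorial : ℝ) / 12 ^ (g+1)
        = ((g:ℝ)+1) / 12 * ((g.factorial : ℝ) / 12 ^ g) := by
      rw [hfac, pow_succ]; ring
    linarith

/-- if `c 0 = −1` and
`c g = (1/2) Σ_{g₁=1}^{g−1} c_{g₁} c_{g−g₁} + (1/12)(5g−4)(5g−6) c_{g−1}` for `g ≥ 1`,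
then for fixed `t₀, t₂` with `t₂ ≠ 0` and `1 − 2t₀t₂ > 0`, the power series
`Σ_g c_g t₂^{3g−1} (1 − 2t₀t₂)^{−(5g−1)/2} λ^{2g}` has radius of convergence
`1/limsup |b_n|^{1/n}` equal to zero. -/
theorem radius_of_convergence_zero (c : ℕ → ℝ) (hc0 : c 0 = -1)
    (hcrec : ∀ g : ℕ, 1 ≤ g →
      c g = (1 / 2) * (∑ i ∈ Finset.Ico 1 g, c i * c (g - i))
        + (1 / 12) * (5 * (g : ℝ) - 4) * (5 * (g : ℝ) - 6) * c (g - 1))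
    (t0 t2 : ℝ) (ht2 : t2 ≠ 0) (h : 0 < 1 - 2 * t0 * t2) :
    (1 : ℝ≥0∞) / Filter.limsup
        (fun n : ℕ => ENNReal.ofReal (|lambdaCoeff c t0 t2 n| ^ ((n : ℝ)⁻¹)))
        atTop = 0 := by
  set D : ℝ := 1 - 2 * t0 * t2 with hDdef
  have hD : 0 < D := h
  set A : ℝ := D ^ ((1:ℝ)/2) / |t2| with hAdef
  set B : ℝ := |t2| ^ 3 * D ^ (-(5:ℝ)/2) with hBdef
  have ht2' : (0:ℝ) < |t2| := abs_pos.mpr ht2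
  have hA : 0 < A := by
    apply div_pos (Real.rpow_pos_of_pos hD _) ht2'
  have hB : 0 < B := by
    apply mul_pos (by positivity) (Real.rpow_pos_of_pos hD _)
  -- value of the coefficient at even indices
  have hval : ∀ g : ℕ, |lambdaCoeff c t0 t2 (2*g)| = |c g| * B ^ g * A := by
    intro g
    have h2g : (2*g)/2 = g := by omega
    simp only [lambdaCoeff, if_pos (even_two_mul g), h2g, ← hDdef]
    rw [abs_mul, abs_mul, abs_of_pos (Real.rpow_pos_of_pos hD _)]
    have e1 : |t2 ^ (3*(g:ℤ)-1)| = (|t2|^3)^g / |t2| := by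
      rw [zpow_sub₀ ht2, zpow_one,
        show (3*(g:ℤ)) = ((3*g : ℕ) : ℤ) by push_cast; ring, zpow_natCast,
        abs_div, abs_pow, pow_mul]
    have e2 : D ^ (-(5*(g:ℝ)-1)/2) = (D ^ (-(5:ℝ)/2))^g * D ^ ((1:ℝ)/2) := by
      rw [show (-(5*(g:ℝ)-1)/2) = (-(5:ℝ)/2) * (g:ℝ) + 1/2 by ring,
        Real.rpow_add hD, Real.rpow_mul hD.le, Real.rpow_natCast]
    rw [e1, e2, hAdef, hBdef, mul_pow]
    field_simp
  suffices hls : Filter.limsup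
      (fun n : ℕ => ENNReal.ofReal (|lambdaCoeff c t0 t2 n| ^ ((n : ℝ)⁻¹)))
      atTop = ⊤ by
    rw [hls]; simp
  apply ENNReal.eq_top_of_forall_nnreal_le
  intro r
  apply le_limsup_of_frequently_le'
  set M : ℝ := max (r:ℝ) 1 with hMdef
  have hM1 : (1:ℝ) ≤ M := le_max_right _ _
  have hM0 : (0:ℝ) < M := lt_of_lt_of_le one_pos hM1
  set x : ℝ := 12 * M^2 / B with hxdef
  obtain ⟨N, hN⟩ := eventually_atTop.mp
    ((FloorSemiring.tendsto_pow_div_factorial_atTop x).eventually_lt_const hA)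
  rw [frequently_atTop]
  intro N0
  set g : ℕ := max (max N0 N) 1 with hgdef
  have hg1 : 1 ≤ g := le_max_right _ _
  have hgN : N ≤ g := le_trans (le_max_right _ _) (le_max_left _ _)
  have hgN0 : N0 ≤ 2 * g := by
    have := le_trans (le_max_left N0 N) (le_max_left _ 1)
    omega
  refine ⟨2 * g, hgN0, ?_⟩
  -- main estimate
  have hfac : x ^ g / (g.factorial : ℝ) < A := hN g hgN
  have hfacpos : (0:ℝ) < (g.factorial : ℝ) := by positivity
  have h1 : x ^ g / A ≤ (g.factorial : ℝ) := by
    rw [div_le_iff₀ hA]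
    rw [div_lt_iff₀ hfacpos] at hfac
    linarith [hfac]
  have h2 : (g.factorial : ℝ) / 12 ^ g ≤ c g := c_lb c hc0 hcrec g hg1
  have hcg : 0 < c g := c_pos c hc0 hcrec g hg1
  have hx_pow : x ^ g = 12 ^ g * (M ^ 2) ^ g / B ^ g := by
    rw [hxdef, div_pow, mul_pow]
  have h3 : (x ^ g / A) / 12 ^ g * B ^ g * A = M ^ (2 * g) := by
    rw [hx_pow, pow_mul]
    field_simp
  have hkey : M ^ (2*g) ≤ |lambdaCoeff c t0 t2 (2*g)| := by
    rw [hval g, abs_of_pos hcg]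
    calc M ^ (2*g) = (x ^ g / A) / 12 ^ g * B ^ g * A := h3.symm
      _ ≤ (g.factorial : ℝ) / 12 ^ g * B ^ g * A := by gcongr
      _ ≤ c g * B ^ g * A := by gcongr
  have h2gne : ((2*g : ℕ) : ℝ) ≠ 0 := by positivity
  have hMle : M ≤ |lambdaCoeff c t0 t2 (2*g)| ^ (((2*g : ℕ) : ℝ))⁻¹ := by
    have hr := Real.rpow_le_rpow (by positivity) hkey
      (by positivity : (0:ℝ) ≤ (((2*g : ℕ) : ℝ))⁻¹)
    rwa [← Real.rpow_natCast M (2*g), ← Real.rpow_mul hM0.le,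
      mul_inv_cancel₀ h2gne, Real.rpow_one] at hr
  calc (r : ℝ≥0∞) = ENNReal.ofReal (r : ℝ) := (ENNReal.ofReal_coe_nnreal).symm
    _ ≤ ENNReal.ofReal M := ENNReal.ofReal_le_ofReal (le_max_left _ _)
    _ ≤ _ := ENNReal.ofReal_le_ofReal hMle
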